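/- Let m ≥ 1 be an integer and let ψ : ℝ → ℂ be measurable with ∫_ℝ (1 + |x|^{2m}) |ψ(x)| dx < ∞ and ∫_ℝ x^j ψ(x) dx = 0 for every j = 0, 1, …, m−1. Then ⟨ψ, G_{2m} ψ⟩ = −((−1)^m / (2·(2m)!)) · binom(2m, m) · |∫_ℝ x^m ψ(x) dx|² = −((−1)^m π / (m!)²) · |c_m|², where c_m := (−i)^m (2π)^{−1/2} ∫_ℝ x^m ψ(x) dx is the m-th derivative of the Fourier transform ψ̂ at k = 0. -/

import Mathlib

open MeasureTheory Filter

/-- `⟨ψ, G_{2m} ψ⟩ = −(1/(2·(2m)!)) ∬ conj(ψ(x)) (x−y)^{2m} ψ(y) dx dy`. -/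
noncomputable def Gpair (m : ℕ) (ψ : ℝ → ℂ) : ℂ :=
  -(1 / (2 * (Nat.factorial (2 * m) : ℂ))) *
    ∫ x : ℝ, ∫ y : ℝ, (starRingEnd ℂ) (ψ x) * ((x : ℂ) - (y : ℂ)) ^ (2 * m) * ψ y

lemma intk (m k : ℕ) (hk : k ≤ 2 * m) (ψ : ℝ → ℂ) (hmeas : Measurable ψ)
    (hint : Integrable (fun x : ℝ => (1 + |x| ^ (2 * m)) * ‖ψ x‖)) :
    Integrable (fun x : ℝ => (x : ℂ) ^ k * ψ x) := by
  apply hint.mono'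
  · exact ((Complex.measurable_ofReal.pow_const k).mul hmeas).aestronglyMeasurable
  · filter_upwards with x
    rw [norm_mul, norm_pow, Complex.norm_real, Real.norm_eq_abs]
    have h1 : |x| ^ k ≤ 1 + |x| ^ (2 * m) := by
      rcases le_or_gt |x| 1 with h | h
      · have h2 : |x| ^ k ≤ 1 := pow_le_one₀ (abs_nonneg x) h
        nlinarith [pow_nonneg (abs_nonneg x) (2 * m)]
      · have h2 : |x| ^ k ≤ |x| ^ (2 * m) := pow_le_pow_right₀ h.le hk
        nlinarith
    exact mul_le_mul_of_nonneg_right h1 (norm_nonneg _)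

/-- If the first `m` moments of `ψ` vanish, then
`⟨ψ, G_{2m}ψ⟩ = −((−1)^m/(2·(2m)!)) C(2m,m) |∫ x^m ψ(x) dx|²
             = −((−1)^m π/(m!)²) |c_m|²`,
where `c_m = (−i)^m (2π)^{−1/2} ∫ x^m ψ(x) dx = ψ̂^{(m)}(0)`. -/
theorem stmt13 (m : ℕ) (hm : 1 ≤ m) (ψ : ℝ → ℂ) (hmeas : Measurable ψ)
    (hint : Integrable (fun x : ℝ => (1 + |x| ^ (2 * m)) * ‖ψ x‖))
    (hmom : ∀ j < m, ∫ x : ℝ, (x : ℂ) ^ j * ψ x = 0) :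
    Gpair m ψ =
      -((-1 : ℂ) ^ m / (2 * (Nat.factorial (2 * m) : ℂ))) * (Nat.choose (2 * m) m : ℂ) *
        ((‖∫ x : ℝ, (x : ℂ) ^ m * ψ x‖ ^ 2 : ℝ) : ℂ) ∧
    Gpair m ψ =
      -((-1 : ℂ) ^ m * (Real.pi : ℂ) / (Nat.factorial m : ℂ) ^ 2) *
        ((‖(-Complex.I) ^ m * (((2 * Real.pi) ^ (-(1 : ℝ) / 2) : ℝ) : ℂ) *
            ∫ x : ℝ, (x : ℂ) ^ m * ψ x‖ ^ 2 : ℝ) : ℂ) := by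
  set M : ℕ → ℂ := fun j => ∫ x : ℝ, (x : ℂ) ^ j * ψ x with hM
  -- integrability of conj-moments
  have hconjint : ∀ k ≤ 2 * m, Integrable (fun x : ℝ => (starRingEnd ℂ) (ψ x) * (x : ℂ) ^ k) := by
    intro k hk
    have h1 : Integrable (fun x : ℝ => (x : ℂ) ^ k * (starRingEnd ℂ) (ψ x)) := by
      apply intk m k hk _ (Complex.continuous_conj.measurable.comp hmeas)
      simpa using hint
    simpa [mul_comm] using h1
  have hconjval : ∀ k : ℕ, (∫ x : ℝ, (starRingEnd ℂ) (ψ x) * (x : ℂ) ^ k)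
      = (starRingEnd ℂ) (M k) := by
    intro k
    rw [hM]
    rw [← integral_conj]
    congr 1 with x
    simp [mul_comm]
  -- step 1: rewrite the inner integral
  have hin : (fun x : ℝ => ∫ y : ℝ, (starRingEnd ℂ) (ψ x) * ((x : ℂ) - (y : ℂ)) ^ (2 * m) * ψ y)
      = fun x : ℝ => ∑ k ∈ Finset.range (2 * m + 1),
        ((starRingEnd ℂ) (ψ x) * (x : ℂ) ^ k) *
          ((-1 : ℂ) ^ (k + 2 * m) * ((2 * m).choose k : ℂ) * M (2 * m - k)) := by
    funext x
    have : (fun y : ℝ => (starRingEnd ℂ) (ψ x) * ((x : ℂ) - (y : ℂ)) ^ (2 * m) * ψ y)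
        = fun y : ℝ => ∑ k ∈ Finset.range (2 * m + 1),
          ((starRingEnd ℂ) (ψ x) * (x : ℂ) ^ k * ((-1 : ℂ) ^ (k + 2 * m) * ((2 * m).choose k : ℂ)))
            * ((y : ℂ) ^ (2 * m - k) * ψ y) := by
      funext y
      rw [sub_pow, Finset.mul_sum, Finset.sum_mul]
      congr 1 with k
      ring
    rw [this, integral_finset_sum]
    · congr 1 with k
      rw [integral_const_mul]
      ring
    · intro k _
      exact (intk m (2 * m - k) (by omega) ψ hmeas hint).const_mul _
  -- step 2: outer integral
  have hout : (∫ x : ℝ, ∫ y : ℝ, (starRingEnd ℂ) (ψ x) * ((x : ℂ) - (y : ℂ)) ^ (2 * m) * ψ y)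
      = (-1 : ℂ) ^ m * ((2 * m).choose m : ℂ) * ((‖M m‖ : ℂ) ^ 2) := by
    rw [hin, integral_finset_sum]
    · have heach : ∀ k ∈ Finset.range (2 * m + 1),
          (∫ x : ℝ, ((starRingEnd ℂ) (ψ x) * (x : ℂ) ^ k) *
            ((-1 : ℂ) ^ (k + 2 * m) * ((2 * m).choose k : ℂ) * M (2 * m - k)))
          = (starRingEnd ℂ) (M k) *
            ((-1 : ℂ) ^ (k + 2 * m) * ((2 * m).choose k : ℂ) * M (2 * m - k)) := by
        intro k _
        rw [integral_mul_const, hconjval]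
      rw [Finset.sum_congr rfl heach]
      rw [Finset.sum_eq_single m]
      · have hpow : ((-1 : ℂ)) ^ (m + 2 * m) = (-1 : ℂ) ^ m := by
          rw [pow_add]
          simp [pow_mul]
        have hmm : 2 * m - m = m := by omega
        have hcm : (starRingEnd ℂ) (M m) * M m = ((‖M m‖ : ℂ) ^ 2) := by
          rw [mul_comm, Complex.mul_conj, Complex.normSq_eq_norm_sq]
          push_cast
          ring
        rw [hpow, hmm]
        rw [show (starRingEnd ℂ) (M m) * ((-1 : ℂ) ^ m * ((2 * m).choose m : ℂ) * M m)
            = (-1 : ℂ) ^ m * ((2 * m).choose m : ℂ) * ((starRingEnd ℂ) (M m) * M m) by ring, hcm]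
      · intro k hk hkm
        rcases lt_or_gt_of_ne hkm with h | h
        · have hz : M k = 0 := hmom k h
          rw [hz]
          simp
        · have hz : M (2 * m - k) = 0 := hmom (2 * m - k) (by omega)
          rw [hz]
          ring
      · intro h
        exact absurd (Finset.mem_range.mpr (by omega)) h
    · intro k hk
      exact (hconjint k (Nat.lt_succ_iff.mp (Finset.mem_range.mp hk))).mul_const _
  -- final arithmetic
  have hfac : ((2 * m).choose m : ℂ) * (m.factorial : ℂ) ^ 2 = ((2 * m).factorial : ℂ) := by
    have h := Nat.choose_mul_factorial_mul_factorial (show m ≤ 2 * m by omega)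
    rw [show 2 * m - m = m by omega] at h
    have : ((2 * m).choose m * m.factorial * m.factorial : ℕ) = (2 * m).factorial := h
    exact_mod_cast by push_cast [← this]; ring
  have hF : ((2 * m).factorial : ℂ) ≠ 0 := Nat.cast_ne_zero.mpr (Nat.factorial_ne_zero _)
  have hf : ((m.factorial : ℂ)) ≠ 0 := Nat.cast_ne_zero.mpr (Nat.factorial_ne_zero _)
  have hpi : ((Real.pi : ℂ)) ≠ 0 := Complex.ofReal_ne_zero.mpr Real.pi_ne_zero
  constructor
  · rw [Gpair, hout]
    push_cast
    ring
  · rw [Gpair, hout]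
    have hnorm : ‖(-Complex.I) ^ m * (((2 * Real.pi) ^ (-(1 : ℝ) / 2) : ℝ) : ℂ) * M m‖ ^ 2
        = (2 * Real.pi)⁻¹ * ‖M m‖ ^ 2 := by
      rw [norm_mul, norm_mul, norm_pow, norm_neg, Complex.norm_I, one_pow, one_mul,
        Complex.norm_real, Real.norm_eq_abs, abs_of_nonneg (by positivity), mul_pow,
        ← Real.rpow_natCast ((2 * Real.pi) ^ (-(1 : ℝ) / 2)) 2,
        ← Real.rpow_mul (by positivity)]
      rw [show (-(1 : ℝ) / 2 * (2 : ℕ) : ℝ) = -1 by norm_num, Real.rpow_neg_one]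
    rw [hnorm]
    push_cast
    field_simp
    linear_combination -((‖M m‖ : ℂ))^2 * hfac
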